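/- Let 𝒜 and ℬ be families of subsets of a set Z with finite VC-dimensions a = VC(𝒜) and b = VC(ℬ). If a finite set B ⊆ Z is shattered by the union family 𝒢 = {A ∪ B' : A ∈ 𝒜, B' ∈ ℬ}, then 2^{|B|} ≤ Φ_a(|B|)·Φ_b(|B|), where Φ_d(n) = Σ_{i=0}^{d} C(n,i). In particular, the VC-dimension of 𝒢 is finite, and is O((a+b)·log(a+b)). -/

import Mathlib

open MeasureTheory Set
open scoped ENNReal symmDiff

namespace AdvRobust

variable {X : Type*}

/-- Error region of a hypothesis `h : X → Bool`, as a subset of `X × Bool`. -/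
def errSet (h : X → Bool) : Set (X × Bool) := {p | h p.1 ≠ p.2}

/-- Margin area of a hypothesis w.r.t. perturbation type `U`, as a subset of `X × Bool`. -/
def marSet (U : X → Set X) (h : X → Bool) : Set (X × Bool) :=
  {p | ∃ z ∈ U p.1, h z ≠ h p.1}

/-- Margin area of a hypothesis, identified with a subset of the domain `X`. -/
def marSetX (U : X → Set X) (h : X → Bool) : Set X :=
  {x | ∃ z ∈ U x, h z ≠ h x}

/-- Robust loss `L^U_P(h) = P(err(h) ∪ mar_U(h))`. -/
noncomputable def robustLoss [MeasurableSpace X] (U : X → Set X)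
    (P : Measure (X × Bool)) (h : X → Bool) : ℝ≥0∞ :=
  P (errSet h ∪ marSet U h)

/-- Binary (0/1) loss `L^{0/1}_P(h) = P(err(h))`. -/
noncomputable def binLoss [MeasurableSpace X]
    (P : Measure (X × Bool)) (h : X → Bool) : ℝ≥0∞ :=
  P (errSet h)

/-- Robust loss via the pointwise robust loss set `{(x,y) | ∃ z ∈ U x, h z ≠ y}`. -/
noncomputable def robustLoss' [MeasurableSpace X] (U : X → Set X)
    (P : Measure (X × Bool)) (h : X → Bool) : ℝ≥0∞ :=
  P {p : X × Bool | ∃ z ∈ U p.1, h z ≠ p.2}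

/-- A family of sets `G` shatters a finite set `B`. -/
def Shatters {Z : Type*} (G : Set (Set Z)) (B : Finset Z) : Prop :=
  ∀ F ⊆ B, ∃ g ∈ G, ∀ z ∈ B, (z ∈ g ↔ z ∈ F)

/-- The VC-dimension of `G` is at most `d`. -/
def VCdimLE {Z : Type*} (G : Set (Set Z)) (d : ℕ) : Prop :=
  ∀ B : Finset Z, Shatters G B → B.card ≤ d

/-- The VC-dimension of `G` equals `d`. -/
def VCdimEq {Z : Type*} (G : Set (Set Z)) (d : ℕ) : Prop :=
  VCdimLE G d ∧ ∃ B : Finset Z, Shatters G B ∧ B.card = d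

/-- The family `{h⁻¹(1) : h ∈ H}` associated with a class of Boolean hypotheses. -/
def classSets (H : Set (X → Bool)) : Set (Set X) := (fun h => h ⁻¹' {true}) '' H

/-- The margin class `{mar_U(h) : h ∈ H}`. -/
def marginClass (U : X → Set X) (H : Set (X → Bool)) : Set (Set (X × Bool)) :=
  (marSet U) '' H

open Classical in
noncomputable def traceF {Z : Type*} (B : Finset Z) (A : Set Z) : Finset {x // x ∈ B} :=
  Finset.univ.filter (fun x => (x : Z) ∈ A)

lemma mem_traceF {Z : Type*} {B : Finset Z} {A : Set Z} {x : {x // x ∈ B}} :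
    x ∈ traceF B A ↔ (x : Z) ∈ A := by
  simp [traceF]

/-- The family of traces of `𝒜` on `B`. -/
noncomputable def traceFam {Z : Type*} (𝒜 : Set (Set Z)) (B : Finset Z) :
    Finset (Finset {x // x ∈ B}) :=
  (Set.toFinite (traceF B '' 𝒜)).toFinset

lemma mem_traceFam {Z : Type*} {𝒜 : Set (Set Z)} {B : Finset Z} {t : Finset {x // x ∈ B}} :
    t ∈ traceFam 𝒜 B ↔ ∃ A ∈ 𝒜, traceF B A = t := by
  simp [traceFam]

lemma sum_pow_le (n d : ℕ) : ∑ i ∈ Finset.range (d + 1), n ^ i ≤ (n + 1) ^ d := by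
  induction d with
  | zero => simp
  | succ d ih =>
      rw [Finset.sum_range_succ, pow_succ]
      have h1 : n ^ (d + 1) ≤ n * (n + 1) ^ d := by
        rw [pow_succ, mul_comm]
        exact Nat.mul_le_mul_left n (Nat.pow_le_pow_left (Nat.le_succ n) d)
      calc ∑ i ∈ Finset.range (d + 1), n ^ i + n ^ (d + 1)
          ≤ (n + 1) ^ d + n * (n + 1) ^ d := Nat.add_le_add ih h1
        _ = (n + 1) ^ d * (n + 1) := by ring

lemma sum_choose_le_pow (d n : ℕ) :
    ∑ i ∈ Finset.range (d + 1), n.choose i ≤ (n + 1) ^ d :=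
  le_trans (Finset.sum_le_sum fun i _ => Nat.choose_le_pow n i) (sum_pow_le n d)

/-- Sauer–Shelah: the number of traces on `B` is at most `Φ_a(|B|)`. -/
lemma traceFam_card_le {Z : Type*} {𝒜 : Set (Set Z)} {a : ℕ} (h : VCdimLE 𝒜 a)
    (B : Finset Z) :
    (traceFam 𝒜 B).card ≤ ∑ i ∈ Finset.range (a + 1), B.card.choose i := by
  classical
  have hvc : (traceFam 𝒜 B).vcDim ≤ a := by
    apply Finset.sup_le
    intro s hs
    rw [Finset.mem_shatterer] at hs
    set s' : Finset Z := s.map ⟨Subtype.val, Subtype.val_injective⟩ with hs'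
    have hcard : s'.card = s.card := Finset.card_map _
    have hshat : Shatters 𝒜 s' := by
      intro F hF
      set t : Finset {x // x ∈ B} := s.filter (fun x => (x : Z) ∈ F) with ht
      have htsub : t ⊆ s := by
        intro x hx
        rw [ht] at hx
        exact (Finset.mem_filter.mp hx).1
      obtain ⟨u, hu, hsu⟩ := hs htsub
      obtain ⟨A, hA, rfl⟩ := mem_traceFam.1 hu
      refine ⟨A, hA, ?_⟩
      intro z hz
      rw [hs', Finset.mem_map] at hz
      obtain ⟨x, hxs, rfl⟩ := hz
      have : x ∈ s ∩ traceF B A ↔ x ∈ t := by rw [hsu]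
      simp only [Finset.mem_inter, mem_traceF, ht, Finset.mem_filter] at this
      constructor
      · intro hzA
        exact (this.1 ⟨hxs, hzA⟩).2
      · intro hzF
        exact (this.2 ⟨hxs, hzF⟩).2
    have := h s' hshat
    omega
  calc (traceFam 𝒜 B).card ≤ (traceFam 𝒜 B).shatterer.card :=
        Finset.card_le_card_shatterer _
    _ ≤ ∑ k ∈ Finset.Iic (traceFam 𝒜 B).vcDim, (Fintype.card {x // x ∈ B}).choose k :=
        Finset.card_shatterer_le_sum_vcDim
    _ ≤ ∑ i ∈ Finset.range (a + 1), B.card.choose i := by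
        rw [Fintype.card_coe]
        apply Finset.sum_le_sum_of_subset
        intro k hk
        rw [Finset.mem_Iic] at hk
        rw [Finset.mem_range]
        omega

/-- Counting: if the union family shatters `B` then `2^|B| ≤ |T_𝒜| * |T_ℬ|`. -/
lemma two_pow_le_traceFam_mul {Z : Type*} {𝒜 ℬ : Set (Set Z)} {B : Finset Z}
    (hsh : Shatters {g | ∃ A ∈ 𝒜, ∃ B' ∈ ℬ, g = A ∪ B'} B) :
    2 ^ B.card ≤ (traceFam 𝒜 B).card * (traceFam ℬ B).card := by
  classical
  have H : ∀ F : Finset Z, ∃ A Bs : Set Z,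
      F ⊆ B → A ∈ 𝒜 ∧ Bs ∈ ℬ ∧ ∀ z ∈ B, (z ∈ A ∪ Bs ↔ z ∈ F) := by
    intro F
    by_cases hF : F ⊆ B
    · obtain ⟨g, hg, hiff⟩ := hsh F hF
      obtain ⟨A, hA, Bs, hBs, rfl⟩ := hg
      exact ⟨A, Bs, fun _ => ⟨hA, hBs, hiff⟩⟩
    · exact ⟨∅, ∅, fun h => absurd h hF⟩
  choose fA fB hprop using H
  have hle : B.powerset.card ≤ ((traceFam 𝒜 B) ×ˢ (traceFam ℬ B)).card := by
    apply Finset.card_le_card_of_injOn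
      (fun F => (traceF B (fA F), traceF B (fB F)))
    · intro F hF
      rw [Finset.mem_coe, Finset.mem_powerset] at hF
      obtain ⟨hA, hBs, _⟩ := hprop F hF
      rw [Finset.mem_coe, Finset.mem_product]
      exact ⟨mem_traceFam.2 ⟨_, hA, rfl⟩, mem_traceFam.2 ⟨_, hBs, rfl⟩⟩
    · intro F hF G hG heq
      rw [Finset.mem_coe, Finset.mem_powerset] at hF hG
      obtain ⟨_, _, hFiff⟩ := hprop F hF
      obtain ⟨_, _, hGiff⟩ := hprop G hG
      have h1 : traceF B (fA F) = traceF B (fA G) := congrArg Prod.fst heq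
      have h2 : traceF B (fB F) = traceF B (fB G) := congrArg Prod.snd heq
      ext z
      by_cases hz : z ∈ B
      · have e1 : (z ∈ fA F ↔ z ∈ fA G) := by
          have := Finset.ext_iff.1 h1 ⟨z, hz⟩
          simpa [mem_traceF] using this
        have e2 : (z ∈ fB F ↔ z ∈ fB G) := by
          have := Finset.ext_iff.1 h2 ⟨z, hz⟩
          simpa [mem_traceF] using this
        rw [← hFiff z hz, ← hGiff z hz]
        simp only [Set.mem_union]
        rw [e1, e2]
      · constructor
        · intro hzF; exact absurd (hF hzF) hz
        · intro hzG; exact absurd (hG hzG) hz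
  rw [Finset.card_powerset, Finset.card_product] at hle
  exact hle

lemma keyReal (n d : ℕ) (h : 2 ^ n ≤ (n + 1) ^ d) :
    (n : ℝ) ≤ 50 * ((d : ℝ) * Real.log d + 1) := by
  have hdlog : 0 ≤ (d : ℝ) * Real.log d := by
    rcases Nat.eq_zero_or_pos d with hd | hd
    · simp [hd]
    · exact mul_nonneg (by positivity) (Real.log_nonneg (by exact_mod_cast hd))
  rcases Nat.eq_zero_or_pos n with hn | hn
  · rw [hn]; push_cast; linarith
  rcases Nat.eq_zero_or_pos d with hd | hd
  · exfalso
    rw [hd, pow_zero] at h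
    have h2 : 1 < 2 ^ n := Nat.one_lt_two_pow (by omega)
    omega
  -- main case: n ≥ 1, d ≥ 1
  have hn1 : (1 : ℝ) ≤ n := by exact_mod_cast hn
  have hd1 : (1 : ℝ) ≤ d := by exact_mod_cast hd
  have hR : (2 : ℝ) ^ n ≤ ((n : ℝ) + 1) ^ d := by exact_mod_cast h
  have hlog : (n : ℝ) * Real.log 2 ≤ (d : ℝ) * Real.log ((n : ℝ) + 1) := by
    have := Real.log_le_log (by positivity) hR
    rwa [Real.log_pow, Real.log_pow] at this
  have hlog2 : (0.6931471803 : ℝ) < Real.log 2 := Real.log_two_gt_d9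
  set s := Real.sqrt n with hsdef
  have hs0 : 0 ≤ s := Real.sqrt_nonneg _
  have hns : (n : ℝ) = s * s := by
    rw [hsdef, Real.mul_self_sqrt (by positivity)]
  have key1 : Real.log ((n : ℝ) + 1) ≤ 2 * Real.sqrt ((n : ℝ) + 1) := by
    have h1 : Real.log (Real.sqrt ((n : ℝ) + 1)) ≤ Real.sqrt ((n : ℝ) + 1) - 1 :=
      Real.log_le_sub_one_of_pos (Real.sqrt_pos.2 (by positivity))
    rw [Real.log_sqrt (by positivity)] at h1
    linarith
  have hsqrt : Real.sqrt ((n : ℝ) + 1) ≤ 1.5 * s := by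
    have h1 : Real.sqrt ((n : ℝ) + 1) ≤ Real.sqrt (2 * n) :=
      Real.sqrt_le_sqrt (by linarith)
    have h2 : Real.sqrt (2 * (n : ℝ)) = Real.sqrt 2 * s := by
      rw [hsdef, Real.sqrt_mul (by norm_num)]
    have h3 : Real.sqrt 2 ≤ 1.5 := by
      rw [show (1.5 : ℝ) = Real.sqrt (1.5 ^ 2) by rw [Real.sqrt_sq (by norm_num)]]
      exact Real.sqrt_le_sqrt (by norm_num)
    have h4 : Real.sqrt 2 * s ≤ 1.5 * s := mul_le_mul_of_nonneg_right h3 hs0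
    linarith
  have hkey : (n : ℝ) * Real.log 2 ≤ 3 * d * s := by
    have h1 : (d : ℝ) * Real.log ((n : ℝ) + 1) ≤ (d : ℝ) * (2 * (1.5 * s)) := by
      apply mul_le_mul_of_nonneg_left _ (by positivity)
      calc Real.log ((n : ℝ) + 1) ≤ 2 * Real.sqrt ((n : ℝ) + 1) := key1
        _ ≤ 2 * (1.5 * s) := by linarith
    calc (n : ℝ) * Real.log 2 ≤ (d : ℝ) * Real.log ((n : ℝ) + 1) := hlog
      _ ≤ (d : ℝ) * (2 * (1.5 * s)) := h1
      _ = 3 * d * s := by ring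
  have hsle : s ≤ 5 * d := by
    rcases eq_or_lt_of_le hs0 with h0 | h0
    · rw [← h0]; positivity
    · have h1 : (0.69 * s) * s ≤ (3 * d) * s := by nlinarith
      have h2 : 0.69 * s ≤ 3 * d := le_of_mul_le_mul_right h1 h0
      linarith
  have hn25 : (n : ℝ) ≤ 25 * d ^ 2 := by nlinarith
  rcases Nat.lt_or_ge d 2 with hd2 | hd2
  · -- d = 1
    have : d = 1 := by omega
    subst this
    push_cast
    rw [Real.log_one]
    push_cast at hn25
    linarith
  · -- d ≥ 2
    have hd2' : (2 : ℝ) ≤ d := by exact_mod_cast hd2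
    have hld : Real.log 2 ≤ Real.log d := Real.log_le_log (by norm_num) hd2'
    have hldnn : 0 ≤ Real.log (d : ℝ) := Real.log_nonneg (by linarith)
    have h32 : Real.log ((n : ℝ) + 1) ≤ 7 * Real.log d := by
      have hm : Real.log ((n : ℝ) + 1) ≤ Real.log (32 * (d : ℝ) ^ 2) := by
        apply Real.log_le_log (by positivity)
        nlinarith
      have he : Real.log (32 * (d : ℝ) ^ 2) = 5 * Real.log 2 + 2 * Real.log d := by
        rw [Real.log_mul (by norm_num) (by positivity), Real.log_pow,
          show (32 : ℝ) = 2 ^ 5 by norm_num, Real.log_pow]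
        push_cast
        ring
      linarith
    have hfin : (n : ℝ) * 0.6931471803 ≤ 7 * ((d : ℝ) * Real.log d) := by
      have h1 : (d : ℝ) * Real.log ((n : ℝ) + 1) ≤ (d : ℝ) * (7 * Real.log d) :=
        mul_le_mul_of_nonneg_left h32 (by positivity)
      nlinarith
    nlinarith [hdlog]


/-- If `𝒜` and `ℬ` have VC-dimensions `a` and `b`, and a finite set `B`
is shattered by the union family `{A ∪ B' : A ∈ 𝒜, B' ∈ ℬ}`, then
`2^|B| ≤ Φ_a(|B|)·Φ_b(|B|)`; in particular the VC-dimension of the union family is finite,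
and is `O((a+b)·log(a+b))` (with a universal constant `c`). -/
theorem statement1 :
    ∃ c : ℝ, 0 < c ∧
      ∀ {Z : Type*} (𝒜 ℬ : Set (Set Z)) (a b : ℕ),
        VCdimEq 𝒜 a → VCdimEq ℬ b →
        ∀ B : Finset Z, Shatters {g | ∃ A ∈ 𝒜, ∃ B' ∈ ℬ, g = A ∪ B'} B →
          (2 ^ B.card ≤ (∑ i ∈ Finset.range (a + 1), B.card.choose i) *
              (∑ i ∈ Finset.range (b + 1), B.card.choose i)) ∧
          (B.card : ℝ) ≤ c * (((a : ℝ) + b) * Real.log ((a : ℝ) + b) + 1) := by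
  refine ⟨50, by norm_num, ?_⟩
  intro Z 𝒜 ℬ a b hA hB B hsh
  have hTA := traceFam_card_le hA.1 B
  have hTB := traceFam_card_le hB.1 B
  have h2 := two_pow_le_traceFam_mul hsh
  have hi : 2 ^ B.card ≤ (∑ i ∈ Finset.range (a + 1), B.card.choose i) *
      (∑ i ∈ Finset.range (b + 1), B.card.choose i) :=
    h2.trans (Nat.mul_le_mul hTA hTB)
  refine ⟨hi, ?_⟩
  have hpow : 2 ^ B.card ≤ (B.card + 1) ^ (a + b) := by
    rw [pow_add]
    exact hi.trans (Nat.mul_le_mul (sum_choose_le_pow a B.card) (sum_choose_le_pow b B.card))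
  have hfin := keyReal B.card (a + b) hpow
  push_cast at hfin
  exact hfin

end AdvRobust
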